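/- Under the same hypotheses (f continuous on [0,∞), f(0)=0, f>0 on (0,∞), t ↦ f(t)/t^{p-2} nondecreasing, t ↦ f(t)/t^{q-2} nonincreasing, 2 < p ≤ q, F(t) = ∫₀ᵗ f(τ)τ dτ), one has the scaling inequalities: for all t > 0 and s ≥ 1, s^p F(t) ≤ F(s t) ≤ s^q F(t); and for all t > 0 and 0 < s ≤ 1, s^q F(t) ≤ F(s t) ≤ s^p F(t). -/

import Mathlib

private lemma pt_ge (f : ℝ → ℝ) (r s x : ℝ) (hs : 0 < s) (hx : 0 < x)
    (h : f x / x ^ r ≤ f (s * x) / (s * x) ^ r) : s ^ r * f x ≤ f (s * x) := by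
  have hx' : (0:ℝ) < x ^ r := Real.rpow_pos_of_pos hx r
  have hsx : (0:ℝ) < (s * x) ^ r := Real.rpow_pos_of_pos (mul_pos hs hx) r
  rw [div_le_div_iff₀ hx' hsx, Real.mul_rpow hs.le hx.le] at h
  nlinarith [h, hx']

private lemma pt_le (f : ℝ → ℝ) (r s x : ℝ) (hs : 0 < s) (hx : 0 < x)
    (h : f (s * x) / (s * x) ^ r ≤ f x / x ^ r) : f (s * x) ≤ s ^ r * f x := by
  have hx' : (0:ℝ) < x ^ r := Real.rpow_pos_of_pos hx r
  have hsx : (0:ℝ) < (s * x) ^ r := Real.rpow_pos_of_pos (mul_pos hs hx) r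
  rw [div_le_div_iff₀ hsx hx', Real.mul_rpow hs.le hx.le] at h
  nlinarith [h, hx']

private lemma subst_lem (f : ℝ → ℝ) (t s : ℝ) (hs : 0 < s) :
    (∫ x in (0:ℝ)..(s*t), f x * x) = s^2 * ∫ x in (0:ℝ)..t, f (s*x) * x := by
  have h := intervalIntegral.integral_comp_mul_left (fun x => f x * x) (a := 0) (b := t) hs.ne'
  simp only [mul_zero] at h
  have h2 : ∀ x : ℝ, f (s*x) * x = s⁻¹ * (f (s*x) * (s*x)) := by
    intro x; field_simp
  simp only [h2, intervalIntegral.integral_const_mul, h, smul_eq_mul]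
  field_simp

private lemma cont_lem (f : ℝ → ℝ) (hf_cont : ContinuousOn f (Set.Ici 0)) (t s : ℝ)
    (ht : 0 < t) (hs : 0 < s) :
    ContinuousOn (fun x => f (s*x) * x) (Set.uIcc (0:ℝ) t) := by
  rw [Set.uIcc_of_le ht.le]
  apply ContinuousOn.mul _ continuousOn_id
  apply hf_cont.comp (continuous_const.mul continuous_id).continuousOn
  intro x hx
  exact mul_nonneg hs.le hx.1

private lemma scale_ge (f : ℝ → ℝ) (hf_cont : ContinuousOn f (Set.Ici 0))
    (t s c : ℝ) (ht : 0 < t) (hs : 0 < s) (hc : 0 ≤ c)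
    (hpt : ∀ x, 0 < x → x ≤ t → c * f x ≤ f (s*x)) :
    s^2 * (c * ∫ x in (0:ℝ)..t, f x * x) ≤ ∫ x in (0:ℝ)..(s*t), f x * x := by
  rw [subst_lem f t s hs]
  have h2 : (0:ℝ) ≤ s^2 := sq_nonneg s
  apply mul_le_mul_of_nonneg_left _ h2
  rw [← intervalIntegral.integral_const_mul]
  apply intervalIntegral.integral_mono_on ht.le
  · exact (continuousOn_const.mul ((hf_cont.mono (by
      rw [Set.uIcc_of_le ht.le]; exact fun x hx => hx.1)).mul continuousOn_id)).intervalIntegrable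
  · exact (cont_lem f hf_cont t s ht hs).intervalIntegrable
  · intro x hx
    rcases eq_or_lt_of_le hx.1 with h0 | h0
    · simp [← h0]
    · exact mul_le_mul_of_nonneg_right (hpt x h0 hx.2) h0.le |>.trans_eq (by ring) |>.trans_eq' (by ring)

private lemma scale_le (f : ℝ → ℝ) (hf_cont : ContinuousOn f (Set.Ici 0))
    (t s c : ℝ) (ht : 0 < t) (hs : 0 < s) (hc : 0 ≤ c)
    (hpt : ∀ x, 0 < x → x ≤ t → f (s*x) ≤ c * f x) :
    (∫ x in (0:ℝ)..(s*t), f x * x) ≤ s^2 * (c * ∫ x in (0:ℝ)..t, f x * x) := by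
  rw [subst_lem f t s hs]
  have h2 : (0:ℝ) ≤ s^2 := sq_nonneg s
  apply mul_le_mul_of_nonneg_left _ h2
  rw [← intervalIntegral.integral_const_mul]
  apply intervalIntegral.integral_mono_on ht.le
  · exact (cont_lem f hf_cont t s ht hs).intervalIntegrable
  · exact (continuousOn_const.mul ((hf_cont.mono (by
      rw [Set.uIcc_of_le ht.le]; exact fun x hx => hx.1)).mul continuousOn_id)).intervalIntegrable
  · intro x hx
    rcases eq_or_lt_of_le hx.1 with h0 | h0
    · simp [← h0]
    · exact mul_le_mul_of_nonneg_right (hpt x h0 hx.2) h0.le |>.trans_eq (by ring) |>.trans_eq' (by ring)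

theorem stmt2 (p q : ℝ) (hp : 2 < p) (hpq : p ≤ q)
    (f : ℝ → ℝ)
    (hf_cont : ContinuousOn f (Set.Ici 0))
    (hf0 : f 0 = 0)
    (hf_pos : ∀ t : ℝ, 0 < t → 0 < f t)
    (hmono : ∀ s t : ℝ, 0 < s → s ≤ t → f s / s ^ (p - 2) ≤ f t / t ^ (p - 2))
    (hanti : ∀ s t : ℝ, 0 < s → s ≤ t → f t / t ^ (q - 2) ≤ f s / s ^ (q - 2))
    (F : ℝ → ℝ)
    (hF : ∀ t : ℝ, F t = ∫ τ in (0:ℝ)..t, f τ * τ) :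
    (∀ t s : ℝ, 0 < t → 1 ≤ s → s ^ p * F t ≤ F (s * t) ∧ F (s * t) ≤ s ^ q * F t) ∧
    (∀ t s : ℝ, 0 < t → 0 < s → s ≤ 1 → s ^ q * F t ≤ F (s * t) ∧ F (s * t) ≤ s ^ p * F t) := by
  have key : ∀ r : ℝ, ∀ s : ℝ, 0 < s → s^2 * s^(r-2) = s^r := by
    intro r s hs
    rw [← Real.rpow_two, ← Real.rpow_add hs]
    norm_num
  constructor
  · intro t s ht hs1
    have hs : 0 < s := lt_of_lt_of_le one_pos hs1
    constructor
    · have := scale_ge f hf_cont t s (s^(p-2)) ht hs (Real.rpow_nonneg hs.le _)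
        (fun x hx hxt => pt_ge f (p-2) s x hs hx
          (hmono x (s*x) hx (le_mul_of_one_le_left hx.le hs1)))
      rw [hF, hF]
      calc s^p * (∫ τ in (0:ℝ)..t, f τ * τ) = s^2 * (s^(p-2) * ∫ τ in (0:ℝ)..t, f τ * τ) := by
            rw [← mul_assoc, key p s hs]
        _ ≤ _ := this
    · have := scale_le f hf_cont t s (s^(q-2)) ht hs (Real.rpow_nonneg hs.le _)
        (fun x hx hxt => pt_le f (q-2) s x hs hx
          (hanti x (s*x) hx (le_mul_of_one_le_left hx.le hs1)))
      rw [hF, hF]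
      calc (∫ τ in (0:ℝ)..s*t, f τ * τ) ≤ s^2 * (s^(q-2) * ∫ τ in (0:ℝ)..t, f τ * τ) := this
        _ = s^q * (∫ τ in (0:ℝ)..t, f τ * τ) := by rw [← mul_assoc, key q s hs]
  · intro t s ht hs hs1
    constructor
    · have := scale_ge f hf_cont t s (s^(q-2)) ht hs (Real.rpow_nonneg hs.le _)
        (fun x hx hxt => pt_ge f (q-2) s x hs hx
          (hanti (s*x) x (mul_pos hs hx) (mul_le_of_le_one_left hx.le hs1)))
      rw [hF, hF]
      calc s^q * (∫ τ in (0:ℝ)..t, f τ * τ) = s^2 * (s^(q-2) * ∫ τ in (0:ℝ)..t, f τ * τ) := by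
            rw [← mul_assoc, key q s hs]
        _ ≤ _ := this
    · have := scale_le f hf_cont t s (s^(p-2)) ht hs (Real.rpow_nonneg hs.le _)
        (fun x hx hxt => pt_le f (p-2) s x hs hx
          (hmono (s*x) x (mul_pos hs hx) (mul_le_of_le_one_left hx.le hs1)))
      rw [hF, hF]
      calc (∫ τ in (0:ℝ)..s*t, f τ * τ) ≤ s^2 * (s^(p-2) * ∫ τ in (0:ℝ)..t, f τ * τ) := this
        _ = s^p * (∫ τ in (0:ℝ)..t, f τ * τ) := by rw [← mul_assoc, key p s hs]
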